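/- A matching M in a finite simple graph Γ is positive if and only if there is an ordering e_1, …, e_n of M such that for each i, the edge e_i has an endpoint of degree 1 in the subgraph of Γ induced by the vertex set of {e_1, …, e_i}. -/

import Mathlib

open SimpleGraph

variable {V : Type*}

/-- A positive matching in a simple graph: a set `M` of pairwise disjoint edges of `G` together
with a vertex weighting `w` such that an edge `uv` of `G` satisfies `w u + w v > 0` iff the edge
belongs to `M`. -/
def IsPositiveMatching (G : SimpleGraph V) (M : Set (Sym2 V)) : Prop :=
  M ⊆ G.edgeSet ∧
  (∀ e ∈ M, ∀ f ∈ M, e ≠ f → ∀ v : V, v ∈ e → v ∉ f) ∧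
  ∃ w : V → ℝ, ∀ u v : V, G.Adj u v → (0 < w u + w v ↔ s(u, v) ∈ M)

/-- A positive matching decomposition of `G` with parts `E 0, …, E (p-1)`: an ordered partition
of the edge set of `G` such that each part is a positive matching of `G` minus the earlier
parts. -/
def IsPMD (G : SimpleGraph V) {p : ℕ} (E : Fin p → Set (Sym2 V)) : Prop :=
  (∀ i j : Fin p, i ≠ j → Disjoint (E i) (E j)) ∧
  (⋃ i, E i) = G.edgeSet ∧
  ∀ i : Fin p, IsPositiveMatching (G.deleteEdges (⋃ j : Fin p, ⋃ (_ : j < i), E j)) (E i)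

/-- The minimum number of parts in a positive matching decomposition of `G`. -/
noncomputable def pmd (G : SimpleGraph V) : ℕ :=
  sInf {p : ℕ | ∃ E : Fin p → Set (Sym2 V), IsPMD G E}

/-- A matching `M` in a finite simple graph `G` is positive iff there is an ordering
`e₁, …, eₙ` of `M` such that each `eᵢ` is a pendant edge (has an endpoint of degree 1) in the
subgraph of `G` induced by the vertex set of `{e₁, …, eᵢ}`. -/
theorem positiveMatching_iff_pendant_ordering [Fintype V] (G : SimpleGraph V)
    (M : Set (Sym2 V)) (hsub : M ⊆ G.edgeSet)
    (hmatch : ∀ e ∈ M, ∀ f ∈ M, e ≠ f → ∀ v : V, v ∈ e → v ∉ f) :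
    (∃ w : V → ℝ, ∀ u v : V, G.Adj u v → (0 < w u + w v ↔ s(u, v) ∈ M)) ↔
      ∃ l : List (Sym2 V), l.Nodup ∧ (∀ e, e ∈ l ↔ e ∈ M) ∧
        ∀ i (hi : i < l.length), ∃ u v : V,
          l.get ⟨i, hi⟩ = s(u, v) ∧ G.Adj u v ∧
          -- `u` has degree 1 in the subgraph induced by the vertex set of the first `i+1` edges:
          -- its unique neighbor among these vertices is `v`
          (∀ x : V, (∃ e ∈ l.take (i + 1), x ∈ e) → G.Adj u x → x = v) := by
  classical
  constructor
  · rintro ⟨w, hw⟩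
    have hfin : M.Finite := Set.toFinite M
    set key : Sym2 V → ℝ := Sym2.lift ⟨fun a b => max (w a) (w b), fun a b => max_comm _ _⟩
      with hkeydef
    let r : Sym2 V → Sym2 V → Prop := fun a b => key a ≤ key b
    haveI : DecidableRel r := fun a b => Classical.dec _
    haveI : IsTotal (Sym2 V) r := ⟨fun a b => le_total _ _⟩
    haveI : IsTrans (Sym2 V) r := ⟨fun a b c => le_trans⟩
    set l : List (Sym2 V) := List.insertionSort r hfin.toFinset.toList with hl
    have hperm : l.Perm hfin.toFinset.toList := List.perm_insertionSort r _
    have hnodup : l.Nodup := hperm.nodup_iff.2 (Finset.nodup_toList _)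
    have hmem : ∀ e, e ∈ l ↔ e ∈ M := fun e => by
      rw [hperm.mem_iff, Finset.mem_toList, Set.Finite.mem_toFinset]
    have hsorted : l.Pairwise r := List.pairwise_insertionSort r _
    refine ⟨l, hnodup, hmem, ?_⟩
    intro i hi
    have heM : l.get ⟨i, hi⟩ ∈ M := (hmem _).1 (l.get_mem _)
    obtain ⟨a, b, hab⟩ : ∃ a b, l.get ⟨i, hi⟩ = s(a, b) := by
      induction l.get ⟨i, hi⟩ using Sym2.ind with
      | _ a b => exact ⟨a, b, rfl⟩
    obtain ⟨u, v, huv, hle⟩ : ∃ u v, l.get ⟨i, hi⟩ = s(u, v) ∧ w v ≤ w u := by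
      rcases le_total (w a) (w b) with h | h
      · exact ⟨b, a, hab.trans (Sym2.eq_swap), h⟩
      · exact ⟨a, b, hab, h⟩
    have hadj : G.Adj u v := by
      have := hsub heM; rw [huv] at this; exact this
    refine ⟨u, v, huv, hadj, ?_⟩
    rintro x ⟨f, hfta, hxf⟩ hux
    by_contra hxv
    have hnotM : s(u, x) ∉ M := by
      intro hmem'
      have hne : s(u, x) ≠ l.get ⟨i, hi⟩ := by
        rw [huv]
        intro hEq
        rcases Sym2.eq_iff.1 hEq with ⟨_, h2⟩ | ⟨h1, _⟩
        · exact hxv h2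
        · exact hadj.ne h1
      exact hmatch _ hmem' _ heM hne u (Sym2.mem_mk_left _ _)
        (by rw [huv]; exact Sym2.mem_mk_left _ _)
    have hsum : w u + w x ≤ 0 := by
      by_contra h
      exact hnotM ((hw u x hux).1 (lt_of_not_ge h))
    obtain ⟨j, hj, hfj⟩ := List.mem_take_iff_getElem.1 hfta
    have hfM : f ∈ M := (hmem f).1 (List.mem_of_mem_take hfta)
    obtain ⟨y, hy⟩ : ∃ y, f = s(x, y) := Sym2.mem_iff_exists.1 hxf
    have hadjxy : G.Adj x y := by
      have := hsub hfM; rw [hy] at this; exact this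
    have hposxy : 0 < w x + w y := (hw x y hadjxy).2 (hy ▸ hfM)
    have hkle : key f ≤ key (l.get ⟨i, hi⟩) := by
      rcases Nat.lt_min.1 hj with ⟨hj1, hj2⟩
      rcases Nat.lt_succ_iff_lt_or_eq.1 hj1 with hlt | heqji
      · have h := hsorted.rel_get_of_lt (a := ⟨j, hj2⟩) (b := ⟨i, hi⟩) hlt
        have : l.get ⟨j, hj2⟩ = f := by simpa using hfj
        rw [this] at h
        exact h
      · subst heqji
        have : l.get ⟨j, hj2⟩ = f := by simpa using hfj
        rw [← this]
    have hkeyE : key (l.get ⟨i, hi⟩) = w u := by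
      rw [huv, hkeydef, Sym2.lift_mk]
      exact max_eq_left hle
    have hkeyF : key f = max (w x) (w y) := by
      rw [hy, hkeydef, Sym2.lift_mk]
    rw [hkeyE, hkeyF] at hkle
    have h1 : w y ≤ max (w x) (w y) := le_max_right _ _
    linarith
  · rintro ⟨l, hnodup, hmem, hpend⟩
    set n := l.length with hn
    choose u v heq0 hadj hpend' using fun i : Fin n => hpend i.1 i.2
    have heq : ∀ i : Fin n, l.get i = s(u i, v i) := fun i => heq0 i
    have hgetM : ∀ i : Fin n, l.get i ∈ M := fun i => (hmem _).1 (l.get_mem _)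
    have hgetinj := List.nodup_iff_injective_get.1 hnodup
    have hdisj : ∀ i j : Fin n, i ≠ j → ∀ x, x ∈ l.get i → x ∉ l.get j := by
      intro i j hij x hx
      exact hmatch _ (hgetM i) _ (hgetM j) (fun h => hij (hgetinj h)) x hx
    have hum : ∀ i, u i ∈ l.get i := fun i => by
      rw [heq i]; exact Sym2.mem_mk_left _ _
    have hvm : ∀ i, v i ∈ l.get i := fun i => by
      rw [heq i]; exact Sym2.mem_mk_right _ _
    have huinj : Function.Injective u := by
      intro i j h
      by_contra hij
      exact hdisj i j hij (u i) (hum i) (h ▸ hum j)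
    have hvinj : Function.Injective v := by
      intro i j h
      by_contra hij
      exact hdisj i j hij (v i) (hvm i) (h ▸ hvm j)
    have huv : ∀ i j, u i ≠ v j := by
      intro i j h
      by_cases hij : i = j
      · subst hij; exact (hadj i).ne h
      · exact hdisj i j hij (u i) (hum i) (h ▸ hvm j)
    set w : V → ℝ := fun x =>
      if h : ∃ i : Fin n, x = u i then ((h.choose : ℕ) : ℝ) + 2
      else if h' : ∃ i : Fin n, x = v i then -(((h'.choose : ℕ) : ℝ) + 1)
      else -((n : ℝ) + 2) with hwdef
    have hwu : ∀ i : Fin n, w (u i) = ((i : ℕ) : ℝ) + 2 := by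
      intro i
      have h : ∃ j : Fin n, u i = u j := ⟨i, rfl⟩
      have hci : h.choose = i := (huinj h.choose_spec).symm
      rw [hwdef]
      simp only [dif_pos h, hci]
    have hwv : ∀ i : Fin n, w (v i) = -(((i : ℕ) : ℝ) + 1) := by
      intro i
      have h : ¬∃ j : Fin n, v i = u j := by
        rintro ⟨j, hj⟩; exact huv j i hj.symm
      have h' : ∃ j : Fin n, v i = v j := ⟨i, rfl⟩
      have hci : h'.choose = i := (hvinj h'.choose_spec).symm
      rw [hwdef]
      simp only [dif_neg h, dif_pos h', hci]
    have hwo : ∀ x, (¬∃ i : Fin n, x = u i) → (¬∃ i : Fin n, x = v i) →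
        w x = -((n : ℝ) + 2) := by
      intro x h h'
      rw [hwdef]
      simp only [dif_neg h, dif_neg h']
    have hilt : ∀ i : Fin n, ((i : ℕ) : ℝ) < (n : ℝ) := fun i => by exact_mod_cast i.2
    -- pendant consequences
    have hgetTake : ∀ (i j : Fin n), j ≤ i → l.get j ∈ l.take (i.1 + 1) := by
      intro i j hji
      refine List.mem_take_iff_getElem.2 ⟨j.1, ?_, ?_⟩
      · exact Nat.lt_min.2 ⟨Nat.lt_succ_of_le hji, j.2⟩
      · simp
    have hNoUU : ∀ i j : Fin n, ¬ G.Adj (u i) (u j) := by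
      intro i j hA
      rcases le_total j i with hji | hij
      · exact huv j i (hpend' i (u j) ⟨l.get j, hgetTake i j hji, hum j⟩ hA)
      · exact huv i j (hpend' j (u i) ⟨l.get i, hgetTake j i hij, hum i⟩ hA.symm)
    have hUV : ∀ i j : Fin n, j ≤ i → G.Adj (u i) (v j) → v j = v i := by
      intro i j hji hA
      exact hpend' i (v j) ⟨l.get j, hgetTake i j hji, hvm j⟩ hA
    refine ⟨w, fun x y hxy => ⟨?_, ?_⟩⟩
    · intro hpos
      by_contra hnM
      by_cases hx : ∃ i : Fin n, x = u i
      · obtain ⟨i, rfl⟩ := hx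
        by_cases hy : ∃ j : Fin n, y = u j
        · obtain ⟨j, rfl⟩ := hy
          exact hNoUU i j hxy
        by_cases hy' : ∃ j : Fin n, y = v j
        · obtain ⟨j, rfl⟩ := hy'
          rcases le_or_gt j i with hji | hij
          · have h1 : j = i := hvinj (hUV i j hji hxy)
            subst h1
            exact hnM (heq j ▸ hgetM j)
          · rw [hwu i, hwv j] at hpos
            have : ((i : ℕ) : ℝ) + 1 ≤ ((j : ℕ) : ℝ) := by exact_mod_cast hij
            linarith
        · rw [hwu i, hwo y hy hy'] at hpos
          have := hilt i
          linarith
      by_cases hx' : ∃ i : Fin n, x = v i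
      · obtain ⟨i, rfl⟩ := hx'
        by_cases hy : ∃ j : Fin n, y = u j
        · obtain ⟨j, rfl⟩ := hy
          rcases le_or_gt i j with hij | hji
          · have h1 : i = j := hvinj (hUV j i hij hxy.symm)
            subst h1
            exact hnM (by rw [Sym2.eq_swap]; exact heq i ▸ hgetM i)
          · rw [hwv i, hwu j] at hpos
            have : ((j : ℕ) : ℝ) + 1 ≤ ((i : ℕ) : ℝ) := by exact_mod_cast hji
            linarith
        by_cases hy' : ∃ j : Fin n, y = v j
        · obtain ⟨j, rfl⟩ := hy'
          rw [hwv i, hwv j] at hpos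
          have h1 : (0 : ℝ) ≤ ((i : ℕ) : ℝ) := Nat.cast_nonneg _
          have h2 : (0 : ℝ) ≤ ((j : ℕ) : ℝ) := Nat.cast_nonneg _
          linarith
        · rw [hwv i, hwo y hy hy'] at hpos
          have h1 : (0 : ℝ) ≤ ((i : ℕ) : ℝ) := Nat.cast_nonneg _
          have h2 : (0 : ℝ) ≤ ((n : ℕ) : ℝ) := Nat.cast_nonneg _
          linarith
      · rw [hwo x hx hx'] at hpos
        by_cases hy : ∃ j : Fin n, y = u j
        · obtain ⟨j, rfl⟩ := hy
          rw [hwu j] at hpos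
          have := hilt j
          linarith
        by_cases hy' : ∃ j : Fin n, y = v j
        · obtain ⟨j, rfl⟩ := hy'
          rw [hwv j] at hpos
          have h1 : (0 : ℝ) ≤ ((j : ℕ) : ℝ) := Nat.cast_nonneg _
          have h2 : (0 : ℝ) ≤ ((n : ℕ) : ℝ) := Nat.cast_nonneg _
          linarith
        · rw [hwo y hy hy'] at hpos
          have h2 : (0 : ℝ) ≤ ((n : ℕ) : ℝ) := Nat.cast_nonneg _
          linarith
    · intro hM
      obtain ⟨i, hget⟩ := List.mem_iff_get.1 ((hmem _).2 hM)
      have hsw : s(u i, v i) = s(x, y) := (heq i).symm.trans hget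
      rcases Sym2.eq_iff.1 hsw with ⟨h1, h2⟩ | ⟨h1, h2⟩
      · rw [← h1, ← h2, hwu i, hwv i]; linarith
      · rw [← h1, ← h2, hwu i, hwv i]; linarith
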